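/- Let S = {v_1,…,v_n} ⊂ ℤ^n be an orthogonal subset with Wu element W = Σ_{i=1}^n k_i e_i, and set R_o = {i : k_i is odd}. If I(S) > n − 3|R_o|, then S is not cubiquitous. -/
import Mathlib


open Finset

/-- The standard dot product on `ℤ^n`. -/
def dotZ {n : ℕ} (v w : Fin n → ℤ) : ℤ := ∑ i, v i * w i

/-- A sublattice `Λ ⊆ ℤ^n` is cubiquitous if every unit cube `x + {0,1}^n`
contains a point of `Λ`. -/
def Cubiquitous {n : ℕ} (Λ : Submodule ℤ (Fin n → ℤ)) : Prop :=
  ∀ x : Fin n → ℤ, ∃ v ∈ Λ, ∀ i, v i = x i ∨ v i = x i + 1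

/-- A family `v_1, …, v_n` of vectors in `ℤ^n` is orthogonal. -/
def OrthogonalSubset {n : ℕ} (v : Fin n → Fin n → ℤ) : Prop :=
  (∀ i, 1 ≤ dotZ (v i) (v i)) ∧ (∀ i j, i ≠ j → dotZ (v i) (v j) = 0)

lemma dot_expand {n : ℕ} (v : Fin n → Fin n → ℤ)
    (horth : ∀ i j, i ≠ j → dotZ (v i) (v j) = 0) (d : Fin n → ℤ) :
    ∑ i, (∑ j, d j * v j i) ^ 2 = ∑ j, d j ^ 2 * dotZ (v j) (v j) := by
  have h1 : ∑ i, (∑ j, d j * v j i) ^ 2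
      = ∑ j, ∑ l, (d j * d l) * dotZ (v j) (v l) := by
    simp only [sq, Finset.sum_mul_sum]
    rw [Finset.sum_comm]
    refine Finset.sum_congr rfl fun j _ => ?_
    rw [Finset.sum_comm]
    refine Finset.sum_congr rfl fun l _ => ?_
    simp only [dotZ, Finset.mul_sum]
    exact Finset.sum_congr rfl fun i _ => by ring
  rw [h1]
  refine Finset.sum_congr rfl fun j _ => ?_
  rw [Finset.sum_eq_single j]
  · ring
  · intro l _ hlj
    rw [horth j l (Ne.symm hlj)]
    ring
  · simp

theorem stmt_4 {n : ℕ} (v : Fin n → Fin n → ℤ) (horth : OrthogonalSubset v)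
    (k : Fin n → ℤ) (hk : ∀ i, k i = (∑ j, v j) i)
    (h : ∑ i, (dotZ (v i) (v i) - 3) >
      (n : ℤ) - 3 * ((univ.filter fun i => Odd (k i)).card : ℤ)) :
    ¬ Cubiquitous (Submodule.span ℤ (Set.range v)) := by
  intro hcub
  obtain ⟨z, hzmem, hz⟩ :=
    hcub (fun i => if Odd (k i) then (k i - 1) / 2 else k i / 2 - 1)
  rw [Submodule.mem_span_range_iff_exists_fun] at hzmem
  obtain ⟨c, hc⟩ := hzmem
  have hzi : ∀ i, z i = ∑ j, c j * v j i := by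
    intro i
    have := congrFun hc i
    simpa [Finset.sum_apply, smul_eq_mul] using this.symm
  have hki : ∀ i, k i = ∑ j, v j i := by
    intro i
    rw [hk i, Finset.sum_apply]
  -- pointwise upper bound for (2 z i - k i)^2
  have key : ∀ i, (2 * z i - k i) ^ 2 ≤ if Odd (k i) then 1 else 4 := by
    intro i
    have hzi' := hz i
    by_cases ho : Odd (k i)
    · simp only [if_pos ho] at hzi' ⊢
      have h' : 2 * z i - k i = -1 ∨ 2 * z i - k i = 1 := by
        obtain ⟨m, hm⟩ := ho; omega
      rcases h' with h' | h' <;> rw [h'] <;> norm_num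
    · simp only [if_neg ho] at hzi' ⊢
      have h' : 2 * z i - k i = -2 ∨ 2 * z i - k i = 0 := by
        obtain ⟨m, hm⟩ := Int.not_odd_iff_even.mp ho; omega
      rcases h' with h' | h' <;> rw [h'] <;> norm_num
  -- upper bound for the total
  set R : Finset (Fin n) := univ.filter fun i => Odd (k i) with hR
  have upper : ∑ i, (2 * z i - k i) ^ 2 ≤ 4 * (n : ℤ) - 3 * (R.card : ℤ) := by
    calc ∑ i, (2 * z i - k i) ^ 2
        ≤ ∑ i, (if Odd (k i) then (1 : ℤ) else 4) :=
          Finset.sum_le_sum fun i _ => key i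
      _ = (R.card : ℤ) * 1 + ((univ.filter fun i => ¬ Odd (k i)).card : ℤ) * 4 := by
          rw [Finset.sum_ite, Finset.sum_const, Finset.sum_const]
          ring
      _ ≤ 4 * (n : ℤ) - 3 * (R.card : ℤ) := by
          have hcard : R.card + (univ.filter fun i => ¬ Odd (k i)).card = n := by
            rw [hR, Finset.card_filter_add_card_filter_not, Finset.card_univ,
              Fintype.card_fin]
          have : ((univ.filter fun i => ¬ Odd (k i)).card : ℤ) = (n : ℤ) - (R.card : ℤ) := by
            push_cast [← hcard]; ring
          rw [this]; linarith
  -- lower bound via orthogonality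
  have hexp : ∑ i, (2 * z i - k i) ^ 2
      = ∑ j, (2 * c j - 1) ^ 2 * dotZ (v j) (v j) := by
    have : ∀ i, 2 * z i - k i = ∑ j, (2 * c j - 1) * v j i := by
      intro i
      rw [hzi i, hki i, Finset.mul_sum, ← Finset.sum_sub_distrib]
      exact Finset.sum_congr rfl fun j _ => by ring
    calc ∑ i, (2 * z i - k i) ^ 2
        = ∑ i, (∑ j, (2 * c j - 1) * v j i) ^ 2 :=
          Finset.sum_congr rfl fun i _ => by rw [this i]
      _ = ∑ j, (2 * c j - 1) ^ 2 * dotZ (v j) (v j) := dot_expand v horth.2 _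
  have lower : ∑ j, dotZ (v j) (v j) ≤ ∑ i, (2 * z i - k i) ^ 2 := by
    rw [hexp]
    refine Finset.sum_le_sum fun j _ => ?_
    have h1 : (1 : ℤ) ≤ (2 * c j - 1) ^ 2 := by
      rcases (by omega : 2 * c j - 1 ≤ -1 ∨ 1 ≤ 2 * c j - 1) with h' | h' <;> nlinarith
    have h2 : (0 : ℤ) ≤ dotZ (v j) (v j) := le_trans zero_le_one (horth.1 j)
    nlinarith
  -- combine with the hypothesis
  have hsum : ∑ i, (dotZ (v i) (v i) - 3)
      = (∑ j, dotZ (v j) (v j)) - 3 * (n : ℤ) := by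
    rw [Finset.sum_sub_distrib, Finset.sum_const, Finset.card_univ, Fintype.card_fin]
    ring
  rw [hsum] at h
  linarith
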